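/- For every nonzero real r and all positive real colour parameters s, s', s'', the coloured R-matrices R_r^{s,s'} satisfy the coloured quantum Yang–Baxter equation R₁₂(r; s, s') * R₁₃(r; s, s'') * R₂₃(r; s', s'') = R₂₃(r; s', s'') * R₁₃(r; s, s'') * R₁₂(r; s, s'). -/
import Mathlib


noncomputable section

open Matrix Real

/-- The coloured `R`-matrix `R_r^{s,s'}` of the coloured extension `G_{r,s,s'}` of
`G_{r,s}`, indexed by `Fin 3 × Fin 3` (indices `0,1,2` correspond to the paper's
`1,2,3`). -/
def Rrss (r s s' : ℝ) : Matrix (Fin 3 × Fin 3) (Fin 3 × Fin 3) ℝ :=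
  fun p q =>
    if p = (0, 0) ∧ q = (0, 0) then r
    else if p = (1, 1) ∧ q = (1, 1) then r
    else if p = (2, 2) ∧ q = (2, 2) then r
    else if p = (0, 1) ∧ q = (0, 1) then 1
    else if p = (1, 0) ∧ q = (1, 0) then 1
    else if p = (0, 1) ∧ q = (1, 0) then r - r⁻¹
    else if p = (0, 2) ∧ q = (0, 2) then Real.sqrt (s * s')
    else if p = (1, 2) ∧ q = (1, 2) then Real.sqrt (s / s')
    else if p = (2, 0) ∧ q = (2, 0) then 1 / Real.sqrt (s * s')
    else if p = (2, 1) ∧ q = (2, 1) then Real.sqrt (s / s')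
    else 0

/-- Leg embedding `R₁₂` acting on the first two tensor factors. -/
def leg12 {n : ℕ} (R : Matrix (Fin n × Fin n) (Fin n × Fin n) ℝ) :
    Matrix (Fin n × Fin n × Fin n) (Fin n × Fin n × Fin n) ℝ :=
  fun p q => if p.2.2 = q.2.2 then R (p.1, p.2.1) (q.1, q.2.1) else 0

/-- Leg embedding `R₁₃` acting on the first and third tensor factors. -/
def leg13 {n : ℕ} (R : Matrix (Fin n × Fin n) (Fin n × Fin n) ℝ) :
    Matrix (Fin n × Fin n × Fin n) (Fin n × Fin n × Fin n) ℝ :=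
  fun p q => if p.2.1 = q.2.1 then R (p.1, p.2.2) (q.1, q.2.2) else 0

/-- Leg embedding `R₂₃` acting on the last two tensor factors. -/
def leg23 {n : ℕ} (R : Matrix (Fin n × Fin n) (Fin n × Fin n) ℝ) :
    Matrix (Fin n × Fin n × Fin n) (Fin n × Fin n × Fin n) ℝ :=
  fun p q => if p.1 = q.1 then R (p.2.1, p.2.2) (q.2.1, q.2.2) else 0

lemma aux_sq_mul_sq (a b : ℝ) (ha : 0 < a) (hb : 0 < b) :
    Real.sqrt (a ^ 2 * b ^ 2) = a * b := by
  rw [← mul_pow, Real.sqrt_sq (by positivity)]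

lemma aux_sq_div_sq (a b : ℝ) (ha : 0 < a) (hb : 0 < b) :
    Real.sqrt (a ^ 2 / b ^ 2) = a / b := by
  rw [← div_pow, Real.sqrt_sq (by positivity)]

def R' (r a b : ℝ) : Fin 3 → Fin 3 → Fin 3 → Fin 3 → ℝ :=
  ![![![![r,0,0], ![0,0,0], ![0,0,0]],
     ![![0,1,0], ![r - r⁻¹,0,0], ![0,0,0]],
     ![![0,0,a*b], ![0,0,0], ![0,0,0]]],
    ![![![0,0,0], ![1,0,0], ![0,0,0]],
     ![![0,0,0], ![0,r,0], ![0,0,0]],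
     ![![0,0,0], ![0,0,a/b], ![0,0,0]]],
    ![![![0,0,0], ![0,0,0], ![1/(a*b),0,0]],
     ![![0,0,0], ![0,0,0], ![0,a/b,0]],
     ![![0,0,0], ![0,0,0], ![0,0,r]]]]

set_option maxHeartbeats 2000000 in
lemma Rrss_apply (r a b : ℝ) (ha : 0 < a) (hb : 0 < b) (p q : Fin 3 × Fin 3) :
    Rrss r (a ^ 2) (b ^ 2) p q = R' r a b p.1 p.2 q.1 q.2 := by
  obtain ⟨i, j⟩ := p
  obtain ⟨i', j'⟩ := q
  fin_cases i <;> fin_cases j <;> fin_cases i' <;> fin_cases j' <;>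
    norm_num [Rrss, R', Prod.ext_iff, Fin.ext_iff, Matrix.vecHead, Matrix.vecTail,
      aux_sq_mul_sq a b ha hb, aux_sq_div_sq a b ha hb, mul_inv]

lemma R'e0000 (r a b : ℝ) : R' r a b 0 0 0 0 = r := by
  simp [R', Matrix.vecHead, Matrix.vecTail]

lemma R'e0001 (r a b : ℝ) : R' r a b 0 0 0 1 = 0 := by
  simp [R', Matrix.vecHead, Matrix.vecTail]

lemma R'e0002 (r a b : ℝ) : R' r a b 0 0 0 2 = 0 := by
  simp [R', Matrix.vecHead, Matrix.vecTail]

lemma R'e0010 (r a b : ℝ) : R' r a b 0 0 1 0 = 0 := by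
  simp [R', Matrix.vecHead, Matrix.vecTail]

lemma R'e0011 (r a b : ℝ) : R' r a b 0 0 1 1 = 0 := by
  simp [R', Matrix.vecHead, Matrix.vecTail]

lemma R'e0012 (r a b : ℝ) : R' r a b 0 0 1 2 = 0 := by
  simp [R', Matrix.vecHead, Matrix.vecTail]

lemma R'e0020 (r a b : ℝ) : R' r a b 0 0 2 0 = 0 := by
  simp [R', Matrix.vecHead, Matrix.vecTail]

lemma R'e0021 (r a b : ℝ) : R' r a b 0 0 2 1 = 0 := by
  simp [R', Matrix.vecHead, Matrix.vecTail]

lemma R'e0022 (r a b : ℝ) : R' r a b 0 0 2 2 = 0 := by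
  simp [R', Matrix.vecHead, Matrix.vecTail]

lemma R'e0100 (r a b : ℝ) : R' r a b 0 1 0 0 = 0 := by
  simp [R', Matrix.vecHead, Matrix.vecTail]

lemma R'e0101 (r a b : ℝ) : R' r a b 0 1 0 1 = 1 := by
  simp [R', Matrix.vecHead, Matrix.vecTail]

lemma R'e0102 (r a b : ℝ) : R' r a b 0 1 0 2 = 0 := by
  simp [R', Matrix.vecHead, Matrix.vecTail]

lemma R'e0110 (r a b : ℝ) : R' r a b 0 1 1 0 = r - r⁻¹ := by
  simp [R', Matrix.vecHead, Matrix.vecTail]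

lemma R'e0111 (r a b : ℝ) : R' r a b 0 1 1 1 = 0 := by
  simp [R', Matrix.vecHead, Matrix.vecTail]

lemma R'e0112 (r a b : ℝ) : R' r a b 0 1 1 2 = 0 := by
  simp [R', Matrix.vecHead, Matrix.vecTail]

lemma R'e0120 (r a b : ℝ) : R' r a b 0 1 2 0 = 0 := by
  simp [R', Matrix.vecHead, Matrix.vecTail]

lemma R'e0121 (r a b : ℝ) : R' r a b 0 1 2 1 = 0 := by
  simp [R', Matrix.vecHead, Matrix.vecTail]

lemma R'e0122 (r a b : ℝ) : R' r a b 0 1 2 2 = 0 := by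
  simp [R', Matrix.vecHead, Matrix.vecTail]

lemma R'e0200 (r a b : ℝ) : R' r a b 0 2 0 0 = 0 := by
  simp [R', Matrix.vecHead, Matrix.vecTail]

lemma R'e0201 (r a b : ℝ) : R' r a b 0 2 0 1 = 0 := by
  simp [R', Matrix.vecHead, Matrix.vecTail]

lemma R'e0202 (r a b : ℝ) : R' r a b 0 2 0 2 = a*b := by
  simp [R', Matrix.vecHead, Matrix.vecTail]

lemma R'e0210 (r a b : ℝ) : R' r a b 0 2 1 0 = 0 := by
  simp [R', Matrix.vecHead, Matrix.vecTail]

lemma R'e0211 (r a b : ℝ) : R' r a b 0 2 1 1 = 0 := by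
  simp [R', Matrix.vecHead, Matrix.vecTail]

lemma R'e0212 (r a b : ℝ) : R' r a b 0 2 1 2 = 0 := by
  simp [R', Matrix.vecHead, Matrix.vecTail]

lemma R'e0220 (r a b : ℝ) : R' r a b 0 2 2 0 = 0 := by
  simp [R', Matrix.vecHead, Matrix.vecTail]

lemma R'e0221 (r a b : ℝ) : R' r a b 0 2 2 1 = 0 := by
  simp [R', Matrix.vecHead, Matrix.vecTail]

lemma R'e0222 (r a b : ℝ) : R' r a b 0 2 2 2 = 0 := by
  simp [R', Matrix.vecHead, Matrix.vecTail]

lemma R'e1000 (r a b : ℝ) : R' r a b 1 0 0 0 = 0 := by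
  simp [R', Matrix.vecHead, Matrix.vecTail]

lemma R'e1001 (r a b : ℝ) : R' r a b 1 0 0 1 = 0 := by
  simp [R', Matrix.vecHead, Matrix.vecTail]

lemma R'e1002 (r a b : ℝ) : R' r a b 1 0 0 2 = 0 := by
  simp [R', Matrix.vecHead, Matrix.vecTail]

lemma R'e1010 (r a b : ℝ) : R' r a b 1 0 1 0 = 1 := by
  simp [R', Matrix.vecHead, Matrix.vecTail]

lemma R'e1011 (r a b : ℝ) : R' r a b 1 0 1 1 = 0 := by
  simp [R', Matrix.vecHead, Matrix.vecTail]

lemma R'e1012 (r a b : ℝ) : R' r a b 1 0 1 2 = 0 := by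
  simp [R', Matrix.vecHead, Matrix.vecTail]

lemma R'e1020 (r a b : ℝ) : R' r a b 1 0 2 0 = 0 := by
  simp [R', Matrix.vecHead, Matrix.vecTail]

lemma R'e1021 (r a b : ℝ) : R' r a b 1 0 2 1 = 0 := by
  simp [R', Matrix.vecHead, Matrix.vecTail]

lemma R'e1022 (r a b : ℝ) : R' r a b 1 0 2 2 = 0 := by
  simp [R', Matrix.vecHead, Matrix.vecTail]

lemma R'e1100 (r a b : ℝ) : R' r a b 1 1 0 0 = 0 := by
  simp [R', Matrix.vecHead, Matrix.vecTail]

lemma R'e1101 (r a b : ℝ) : R' r a b 1 1 0 1 = 0 := by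
  simp [R', Matrix.vecHead, Matrix.vecTail]

lemma R'e1102 (r a b : ℝ) : R' r a b 1 1 0 2 = 0 := by
  simp [R', Matrix.vecHead, Matrix.vecTail]

lemma R'e1110 (r a b : ℝ) : R' r a b 1 1 1 0 = 0 := by
  simp [R', Matrix.vecHead, Matrix.vecTail]

lemma R'e1111 (r a b : ℝ) : R' r a b 1 1 1 1 = r := by
  simp [R', Matrix.vecHead, Matrix.vecTail]

lemma R'e1112 (r a b : ℝ) : R' r a b 1 1 1 2 = 0 := by
  simp [R', Matrix.vecHead, Matrix.vecTail]

lemma R'e1120 (r a b : ℝ) : R' r a b 1 1 2 0 = 0 := by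
  simp [R', Matrix.vecHead, Matrix.vecTail]

lemma R'e1121 (r a b : ℝ) : R' r a b 1 1 2 1 = 0 := by
  simp [R', Matrix.vecHead, Matrix.vecTail]

lemma R'e1122 (r a b : ℝ) : R' r a b 1 1 2 2 = 0 := by
  simp [R', Matrix.vecHead, Matrix.vecTail]

lemma R'e1200 (r a b : ℝ) : R' r a b 1 2 0 0 = 0 := by
  simp [R', Matrix.vecHead, Matrix.vecTail]

lemma R'e1201 (r a b : ℝ) : R' r a b 1 2 0 1 = 0 := by
  simp [R', Matrix.vecHead, Matrix.vecTail]

lemma R'e1202 (r a b : ℝ) : R' r a b 1 2 0 2 = 0 := by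
  simp [R', Matrix.vecHead, Matrix.vecTail]

lemma R'e1210 (r a b : ℝ) : R' r a b 1 2 1 0 = 0 := by
  simp [R', Matrix.vecHead, Matrix.vecTail]

lemma R'e1211 (r a b : ℝ) : R' r a b 1 2 1 1 = 0 := by
  simp [R', Matrix.vecHead, Matrix.vecTail]

lemma R'e1212 (r a b : ℝ) : R' r a b 1 2 1 2 = a/b := by
  simp [R', Matrix.vecHead, Matrix.vecTail]

lemma R'e1220 (r a b : ℝ) : R' r a b 1 2 2 0 = 0 := by
  simp [R', Matrix.vecHead, Matrix.vecTail]

lemma R'e1221 (r a b : ℝ) : R' r a b 1 2 2 1 = 0 := by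
  simp [R', Matrix.vecHead, Matrix.vecTail]

lemma R'e1222 (r a b : ℝ) : R' r a b 1 2 2 2 = 0 := by
  simp [R', Matrix.vecHead, Matrix.vecTail]

lemma R'e2000 (r a b : ℝ) : R' r a b 2 0 0 0 = 0 := by
  simp [R', Matrix.vecHead, Matrix.vecTail]

lemma R'e2001 (r a b : ℝ) : R' r a b 2 0 0 1 = 0 := by
  simp [R', Matrix.vecHead, Matrix.vecTail]

lemma R'e2002 (r a b : ℝ) : R' r a b 2 0 0 2 = 0 := by
  simp [R', Matrix.vecHead, Matrix.vecTail]

lemma R'e2010 (r a b : ℝ) : R' r a b 2 0 1 0 = 0 := by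
  simp [R', Matrix.vecHead, Matrix.vecTail]

lemma R'e2011 (r a b : ℝ) : R' r a b 2 0 1 1 = 0 := by
  simp [R', Matrix.vecHead, Matrix.vecTail]

lemma R'e2012 (r a b : ℝ) : R' r a b 2 0 1 2 = 0 := by
  simp [R', Matrix.vecHead, Matrix.vecTail]

lemma R'e2020 (r a b : ℝ) : R' r a b 2 0 2 0 = 1/(a*b) := by
  simp [R', Matrix.vecHead, Matrix.vecTail]

lemma R'e2021 (r a b : ℝ) : R' r a b 2 0 2 1 = 0 := by
  simp [R', Matrix.vecHead, Matrix.vecTail]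

lemma R'e2022 (r a b : ℝ) : R' r a b 2 0 2 2 = 0 := by
  simp [R', Matrix.vecHead, Matrix.vecTail]

lemma R'e2100 (r a b : ℝ) : R' r a b 2 1 0 0 = 0 := by
  simp [R', Matrix.vecHead, Matrix.vecTail]

lemma R'e2101 (r a b : ℝ) : R' r a b 2 1 0 1 = 0 := by
  simp [R', Matrix.vecHead, Matrix.vecTail]

lemma R'e2102 (r a b : ℝ) : R' r a b 2 1 0 2 = 0 := by
  simp [R', Matrix.vecHead, Matrix.vecTail]

lemma R'e2110 (r a b : ℝ) : R' r a b 2 1 1 0 = 0 := by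
  simp [R', Matrix.vecHead, Matrix.vecTail]

lemma R'e2111 (r a b : ℝ) : R' r a b 2 1 1 1 = 0 := by
  simp [R', Matrix.vecHead, Matrix.vecTail]

lemma R'e2112 (r a b : ℝ) : R' r a b 2 1 1 2 = 0 := by
  simp [R', Matrix.vecHead, Matrix.vecTail]

lemma R'e2120 (r a b : ℝ) : R' r a b 2 1 2 0 = 0 := by
  simp [R', Matrix.vecHead, Matrix.vecTail]

lemma R'e2121 (r a b : ℝ) : R' r a b 2 1 2 1 = a/b := by
  simp [R', Matrix.vecHead, Matrix.vecTail]

lemma R'e2122 (r a b : ℝ) : R' r a b 2 1 2 2 = 0 := by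
  simp [R', Matrix.vecHead, Matrix.vecTail]

lemma R'e2200 (r a b : ℝ) : R' r a b 2 2 0 0 = 0 := by
  simp [R', Matrix.vecHead, Matrix.vecTail]

lemma R'e2201 (r a b : ℝ) : R' r a b 2 2 0 1 = 0 := by
  simp [R', Matrix.vecHead, Matrix.vecTail]

lemma R'e2202 (r a b : ℝ) : R' r a b 2 2 0 2 = 0 := by
  simp [R', Matrix.vecHead, Matrix.vecTail]

lemma R'e2210 (r a b : ℝ) : R' r a b 2 2 1 0 = 0 := by
  simp [R', Matrix.vecHead, Matrix.vecTail]

lemma R'e2211 (r a b : ℝ) : R' r a b 2 2 1 1 = 0 := by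
  simp [R', Matrix.vecHead, Matrix.vecTail]

lemma R'e2212 (r a b : ℝ) : R' r a b 2 2 1 2 = 0 := by
  simp [R', Matrix.vecHead, Matrix.vecTail]

lemma R'e2220 (r a b : ℝ) : R' r a b 2 2 2 0 = 0 := by
  simp [R', Matrix.vecHead, Matrix.vecTail]

lemma R'e2221 (r a b : ℝ) : R' r a b 2 2 2 1 = 0 := by
  simp [R', Matrix.vecHead, Matrix.vecTail]

lemma R'e2222 (r a b : ℝ) : R' r a b 2 2 2 2 = r := by
  simp [R', Matrix.vecHead, Matrix.vecTail]

lemma fin3_mk0 (h : 0 < 3) : (⟨0, h⟩ : Fin 3) = 0 := rfl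
lemma fin3_mk1 (h : 1 < 3) : (⟨1, h⟩ : Fin 3) = 1 := rfl
lemma fin3_mk2 (h : 2 < 3) : (⟨2, h⟩ : Fin 3) = 2 := rfl

lemma trip12 {n : ℕ} (A B C : Matrix (Fin n × Fin n) (Fin n × Fin n) ℝ)
    (p q : Fin n × Fin n × Fin n) :
    (leg12 A * leg13 B * leg23 C) p q =
      ∑ y : Fin n, ∑ z : Fin n, ∑ x : Fin n,
        A (p.1, p.2.1) (x, y) * B (x, p.2.2) (q.1, z) * C (y, z) (q.2.1, q.2.2) := by
  simp only [Matrix.mul_apply, leg12, leg13, leg23, Fintype.sum_prod_type,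
    ite_mul, mul_ite, zero_mul, mul_zero, Finset.sum_ite_eq, Finset.sum_ite_eq',
    Finset.mem_univ, if_true, Finset.sum_mul, Finset.mul_sum, Finset.sum_ite_irrel,
    Finset.sum_const_zero]

lemma trip23 {n : ℕ} (A B C : Matrix (Fin n × Fin n) (Fin n × Fin n) ℝ)
    (p q : Fin n × Fin n × Fin n) :
    (leg23 C * leg13 B * leg12 A) p q =
      ∑ x : Fin n, ∑ y : Fin n, ∑ z : Fin n,
        C (p.2.1, p.2.2) (y, z) * B (p.1, z) (x, q.2.2) * A (x, y) (q.1, q.2.1) := by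
  simp only [Matrix.mul_apply, leg12, leg13, leg23, Fintype.sum_prod_type,
    ite_mul, mul_ite, zero_mul, mul_zero, Finset.sum_ite_eq, Finset.sum_ite_eq',
    Finset.mem_univ, if_true, Finset.sum_mul, Finset.mul_sum, Finset.sum_ite_irrel,
    Finset.sum_const_zero]

set_option maxHeartbeats 2000000 in
lemma cqybe_case0 (r : ℝ) (hr : r ≠ 0) (a b c : ℝ) (ha : 0 < a) (hb : 0 < b) (hc : 0 < c)
    (j k i' j' k' : Fin 3) :
    (leg12 (Rrss r (a^2) (b^2)) * leg13 (Rrss r (a^2) (c^2)) * leg23 (Rrss r (b^2) (c^2)))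
      ((0 : Fin 3), j, k) (i', j', k') =
    (leg23 (Rrss r (b^2) (c^2)) * leg13 (Rrss r (a^2) (c^2)) * leg12 (Rrss r (a^2) (b^2)))
      ((0 : Fin 3), j, k) (i', j', k') := by
  rw [trip12, trip23]
  simp only [Rrss_apply r a b ha hb, Rrss_apply r a c ha hc, Rrss_apply r b c hb hc]
  fin_cases j <;> fin_cases k <;> fin_cases i' <;> fin_cases j' <;> fin_cases k' <;>
    simp only [fin3_mk0, fin3_mk1, fin3_mk2, Fin.sum_univ_three, R'e0000, R'e0001, R'e0002, R'e0010, R'e0011, R'e0012, R'e0020, R'e0021, R'e0022, R'e0100, R'e0101, R'e0102, R'e0110, R'e0111, R'e0112, R'e0120, R'e0121, R'e0122, R'e0200, R'e0201, R'e0202, R'e0210, R'e0211, R'e0212, R'e0220, R'e0221, R'e0222, R'e1000, R'e1001, R'e1002, R'e1010, R'e1011, R'e1012, R'e1020, R'e1021, R'e1022, R'e1100, R'e1101, R'e1102, R'e1110, R'e1111, R'e1112, R'e1120, R'e1121, R'e1122, R'e1200, R'e1201, R'e1202, R'e1210, R'e1211, R'e1212, R'e1220, R'e1221, R'e1222, R'e2000,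 R'e2001, R'e2002, R'e2010, R'e2011, R'e2012, R'e2020, R'e2021, R'e2022, R'e2100, R'e2101, R'e2102, R'e2110, R'e2111, R'e2112, R'e2120, R'e2121, R'e2122, R'e2200, R'e2201, R'e2202, R'e2210, R'e2211, R'e2212, R'e2220, R'e2221, R'e2222, mul_zero, zero_mul,
      add_zero, zero_add, mul_one, one_mul]
  all_goals try rfl
  all_goals try ring
  all_goals (field_simp; ring)

set_option maxHeartbeats 2000000 in
lemma cqybe_case1 (r : ℝ) (hr : r ≠ 0) (a b c : ℝ) (ha : 0 < a) (hb : 0 < b) (hc : 0 < c)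
    (j k i' j' k' : Fin 3) :
    (leg12 (Rrss r (a^2) (b^2)) * leg13 (Rrss r (a^2) (c^2)) * leg23 (Rrss r (b^2) (c^2)))
      ((1 : Fin 3), j, k) (i', j', k') =
    (leg23 (Rrss r (b^2) (c^2)) * leg13 (Rrss r (a^2) (c^2)) * leg12 (Rrss r (a^2) (b^2)))
      ((1 : Fin 3), j, k) (i', j', k') := by
  rw [trip12, trip23]
  simp only [Rrss_apply r a b ha hb, Rrss_apply r a c ha hc, Rrss_apply r b c hb hc]
  fin_cases j <;> fin_cases k <;> fin_cases i' <;> fin_cases j' <;> fin_cases k' <;>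
    simp only [fin3_mk0, fin3_mk1, fin3_mk2, Fin.sum_univ_three, R'e0000, R'e0001, R'e0002, R'e0010, R'e0011, R'e0012, R'e0020, R'e0021, R'e0022, R'e0100, R'e0101, R'e0102, R'e0110, R'e0111, R'e0112, R'e0120, R'e0121, R'e0122, R'e0200, R'e0201, R'e0202, R'e0210, R'e0211, R'e0212, R'e0220, R'e0221, R'e0222, R'e1000, R'e1001, R'e1002, R'e1010, R'e1011, R'e1012, R'e1020, R'e1021, R'e1022, R'e1100, R'e1101, R'e1102, R'e1110, R'e1111, R'e1112, R'e1120, R'e1121, R'e1122, R'e1200, R'e1201, R'e1202, R'e1210, R'e1211, R'e1212, R'e1220, R'e1221, R'e1222, R'e2000, R'e2001, R'e2002, R'e2010, R'e2011, R'e2012, R'e2020, R'e2021, R'e2022, R'e2100, R'e2101, R'e2102, R'e2110, R'e2111, R'e2112, R'e2120, R'e2121, R'e2122, R'e2200, R'e2201, R'e2202, R'e2210, R'e2211, R'e2212, R'e2220, R'e2221, R'e2222, mul_zero, zero_mul,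
      add_zero, zero_add, mul_one, one_mul]
  all_goals try rfl
  all_goals try ring
  all_goals (field_simp; ring)

set_option maxHeartbeats 2000000 in
lemma cqybe_case2 (r : ℝ) (hr : r ≠ 0) (a b c : ℝ) (ha : 0 < a) (hb : 0 < b) (hc : 0 < c)
    (j k i' j' k' : Fin 3) :
    (leg12 (Rrss r (a^2) (b^2)) * leg13 (Rrss r (a^2) (c^2)) * leg23 (Rrss r (b^2) (c^2)))
      ((2 : Fin 3), j, k) (i', j', k') =
    (leg23 (Rrss r (b^2) (c^2)) * leg13 (Rrss r (a^2) (c^2)) * leg12 (Rrss r (a^2) (b^2)))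
      ((2 : Fin 3), j, k) (i', j', k') := by
  rw [trip12, trip23]
  simp only [Rrss_apply r a b ha hb, Rrss_apply r a c ha hc, Rrss_apply r b c hb hc]
  fin_cases j <;> fin_cases k <;> fin_cases i' <;> fin_cases j' <;> fin_cases k' <;>
    simp only [fin3_mk0, fin3_mk1, fin3_mk2, Fin.sum_univ_three, R'e0000, R'e0001, R'e0002, R'e0010, R'e0011, R'e0012, R'e0020, R'e0021, R'e0022, R'e0100, R'e0101, R'e0102, R'e0110, R'e0111, R'e0112, R'e0120, R'e0121, R'e0122, R'e0200, R'e0201, R'e0202, R'e0210, R'e0211, R'e0212, R'e0220, R'e0221, R'e0222, R'e1000, R'e1001, R'e1002, R'e1010, R'e1011, R'e1012, R'e1020, R'e1021, R'e1022, R'e1100, R'e1101, R'e1102, R'e1110, R'e1111, R'e1112, R'e1120, R'e1121, R'e1122, R'e1200, R'e1201, R'e1202, R'e1210, R'e1211, R'e1212, R'e1220, R'e1221, R'e1222, R'e2000, R'e2001, R'e2002, R'e2010, R'e2011, R'e2012, R'e2020, R'e2021, R'e2022, R'e2100, R'e2101, R'e2102, R'e2110, R'e2111, R'e2112, R'e2120,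 R'e2121, R'e2122, R'e2200, R'e2201, R'e2202, R'e2210, R'e2211, R'e2212, R'e2220, R'e2221, R'e2222, mul_zero, zero_mul,
      add_zero, zero_add, mul_one, one_mul]
  all_goals try rfl
  all_goals try ring
  all_goals (field_simp; ring)

/-- for nonzero real `r` and positive colour parameters `s, s', s''`, the
coloured `R`-matrices `R_r^{s,s'}` satisfy the coloured quantum Yang–Baxter equation. -/
theorem Rrss_CQYBE (r : ℝ) (hr : r ≠ 0) (s s' s'' : ℝ)
    (hs : 0 < s) (hs' : 0 < s') (hs'' : 0 < s'') :
    leg12 (Rrss r s s') * leg13 (Rrss r s s'') * leg23 (Rrss r s' s'') =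
      leg23 (Rrss r s' s'') * leg13 (Rrss r s s'') * leg12 (Rrss r s s') := by
  obtain ⟨a, ha, rfl⟩ : ∃ a, 0 < a ∧ s = a ^ 2 :=
    ⟨Real.sqrt s, Real.sqrt_pos.2 hs, (Real.sq_sqrt hs.le).symm⟩
  obtain ⟨b, hb, rfl⟩ : ∃ b, 0 < b ∧ s' = b ^ 2 :=
    ⟨Real.sqrt s', Real.sqrt_pos.2 hs', (Real.sq_sqrt hs'.le).symm⟩
  obtain ⟨c, hc, rfl⟩ : ∃ c, 0 < c ∧ s'' = c ^ 2 :=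
    ⟨Real.sqrt s'', Real.sqrt_pos.2 hs'', (Real.sq_sqrt hs''.le).symm⟩
  ext ⟨i, j, k⟩ ⟨i', j', k'⟩
  fin_cases i
  · exact cqybe_case0 r hr a b c ha hb hc j k i' j' k'
  · exact cqybe_case1 r hr a b c ha hb hc j k i' j' k'
  · exact cqybe_case2 r hr a b c ha hb hc j k i' j' k'
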